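/- Let f: datasets → ℝ have ℓ2-sensitivity Δ, let ε, δ ∈ (0,1), and let σ² ≥ Δ²·2·ln(1.25/δ)/ε². Then the Gaussian mechanism A(D) = f(D) + Z with Z ∼ N(0, σ²) is (ε, δ)-differentially private. -/

import Mathlib

set_option maxHeartbeats 1000000

open MeasureTheory ProbabilityTheory Real
open scoped NNReal ENNReal

lemma gm_Ioi_shift (m t : ℝ) (v : ℝ≥0) :
    gaussianReal m v (Set.Ioi (m + t)) = gaussianReal 0 v (Set.Ioi t) := by
  have h := gaussianReal_map_add_const (μ := 0) (v := v) m
  rw [zero_add] at h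
  rw [← h, Measure.map_apply (measurable_add_const m) measurableSet_Ioi]
  congr 1
  ext u
  simp only [Set.mem_preimage, Set.mem_Ioi]
  constructor <;> intro <;> linarith

lemma gm_Iio_shift (m t : ℝ) (v : ℝ≥0) :
    gaussianReal m v (Set.Iio (m + t)) = gaussianReal 0 v (Set.Iio t) := by
  have h := gaussianReal_map_add_const (μ := 0) (v := v) m
  rw [zero_add] at h
  rw [← h, Measure.map_apply (measurable_add_const m) measurableSet_Iio]
  congr 1
  ext u
  simp only [Set.mem_preimage, Set.mem_Iio]
  constructor <;> intro <;> linarith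

lemma gm_symm (v : ℝ≥0) (t : ℝ) :
    gaussianReal 0 v (Set.Iio (-t)) = gaussianReal 0 v (Set.Ioi t) := by
  have h := gaussianReal_map_const_mul (μ := 0) (v := v) (-1)
  rw [mul_zero, show NNReal.mk ((-1:ℝ)^2) (sq_nonneg _) = 1 by ext; norm_num, one_mul] at h
  conv_rhs => rw [← h]
  rw [Measure.map_apply (measurable_const_mul _) measurableSet_Ioi]
  congr 1
  ext u
  simp only [Set.mem_preimage, Set.mem_Ioi, Set.mem_Iio]
  constructor <;> intro <;> linarith

lemma gm_half {v : ℝ≥0} (hv : v ≠ 0) :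
    gaussianReal 0 v (Set.Ioi (0:ℝ)) = 1/2 := by
  have hsing : gaussianReal 0 v ({0} : Set ℝ) = 0 :=
    gaussianReal_absolutelyContinuous 0 hv Real.volume_singleton
  have hIic : gaussianReal 0 v (Set.Iic (0:ℝ)) = gaussianReal 0 v (Set.Ioi (0:ℝ)) := by
    have h1 : Set.Iio (0:ℝ) ∪ {0} = Set.Iic 0 := by ext u; simp [le_iff_lt_or_eq]
    have h2 : gaussianReal 0 v (Set.Iic (0:ℝ)) ≤ gaussianReal 0 v (Set.Iio (0:ℝ)) + gaussianReal 0 v ({0} : Set ℝ) := by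
      rw [← h1]; exact measure_union_le _ _
    have h3 : gaussianReal 0 v (Set.Iio (0:ℝ)) ≤ gaussianReal 0 v (Set.Iic (0:ℝ)) :=
      measure_mono Set.Iio_subset_Iic_self
    have h4 : gaussianReal 0 v (Set.Iio (0:ℝ)) = gaussianReal 0 v (Set.Ioi (0:ℝ)) := by
      have := gm_symm v 0; rwa [neg_zero] at this
    rw [hsing, add_zero] at h2
    rw [← h4]
    exact le_antisymm h2 h3
  have htot : gaussianReal 0 v (Set.Ioi (0:ℝ)) + gaussianReal 0 v (Set.Iic (0:ℝ)) = 1 := by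
    rw [← measure_union (by simp [Set.disjoint_left]) measurableSet_Iic]
    rw [Set.union_comm, Set.Iic_union_Ioi]
    exact measure_univ
  rw [hIic] at htot
  have h2 : (2:ℝ≥0∞) * gaussianReal 0 v (Set.Ioi (0:ℝ)) = 1 := by
    rw [two_mul]; exact htot
  rw [ENNReal.eq_div_iff (by norm_num) (by norm_num)]
  exact h2

lemma gm_pdf_ratio {a b t : ℝ} {v : ℝ≥0} (hv : 0 < (v:ℝ)) {ε : ℝ}
    (h : (t - b)^2 - (t - a)^2 ≤ 2*v*ε) :
    gaussianPDFReal a v t ≤ Real.exp ε * gaussianPDFReal b v t := by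
  have he : rexp (-(t-a)^2/(2*(v:ℝ))) ≤ rexp ε * rexp (-(t-b)^2/(2*(v:ℝ))) := by
    rw [← Real.exp_add, Real.exp_le_exp]
    have h2 : ((t - b)^2 - (t - a)^2)/(2*(v:ℝ)) ≤ ε := by
      rw [div_le_iff₀ (by positivity)]; linarith
    rw [sub_div] at h2
    rw [neg_div, neg_div]
    linarith
  have hC : (0:ℝ) ≤ (√(2 * π * (v:ℝ)))⁻¹ := by positivity
  rw [gaussianPDFReal, gaussianPDFReal]
  calc (√(2 * π * (v:ℝ)))⁻¹ * rexp (-(t-a)^2/(2*(v:ℝ)))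
      ≤ (√(2 * π * (v:ℝ)))⁻¹ * (rexp ε * rexp (-(t-b)^2/(2*(v:ℝ)))) :=
        mul_le_mul_of_nonneg_left he hC
    _ = rexp ε * ((√(2 * π * (v:ℝ)))⁻¹ * rexp (-(t-b)^2/(2*(v:ℝ)))) := by ring

lemma gm_tail {v : ℝ≥0} (hv : v ≠ 0) {t : ℝ} (ht : 0 ≤ t) :
    gaussianReal 0 v (Set.Ioi t) ≤ ENNReal.ofReal (Real.exp (-t^2/(2*v)) / 2) := by
  have hv0 : (0:ℝ) < v := by positivity
  have key : ∀ x ∈ Set.Ioi t, gaussianPDF 0 v x ≤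
      ENNReal.ofReal (Real.exp (-t^2/(2*v))) * gaussianPDF t v x := by
    intro x hx
    rw [gaussianPDF, gaussianPDF, ← ENNReal.ofReal_mul (by positivity)]
    refine ENNReal.ofReal_le_ofReal ?_
    refine gm_pdf_ratio hv0 ?_
    have hxt : t < x := hx
    have heq : 2*(v:ℝ)*(-t^2/(2*v)) = -t^2 := by field_simp
    rw [heq]
    nlinarith
  have h12 : gaussianReal t v (Set.Ioi t) = 1/2 := by
    have hsh := gm_Ioi_shift t 0 v
    rw [add_zero] at hsh
    rw [hsh, gm_half hv]
  calc gaussianReal 0 v (Set.Ioi t) = ∫⁻ x in Set.Ioi t, gaussianPDF 0 v x :=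
        gaussianReal_apply 0 hv _
    _ ≤ ∫⁻ x in Set.Ioi t, ENNReal.ofReal (Real.exp (-t^2/(2*v))) * gaussianPDF t v x :=
        setLIntegral_mono (by exact (measurable_gaussianPDF t v).const_mul _) key
    _ = ENNReal.ofReal (Real.exp (-t^2/(2*v))) * ∫⁻ x in Set.Ioi t, gaussianPDF t v x :=
        lintegral_const_mul _ (measurable_gaussianPDF t v)
    _ = ENNReal.ofReal (Real.exp (-t^2/(2*v))) * gaussianReal t v (Set.Ioi t) := by
        rw [← gaussianReal_apply t hv]
    _ = ENNReal.ofReal (Real.exp (-t^2/(2*v))) * ENNReal.ofReal (1/2) := by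
        rw [h12]
        congr 1
        rw [ENNReal.ofReal_div_of_pos (by norm_num), ENNReal.ofReal_one, ENNReal.ofReal_ofNat]
    _ = ENNReal.ofReal (Real.exp (-t^2/(2*v)) / 2) := by
        rw [← ENNReal.ofReal_mul (Real.exp_pos _).le, mul_one_div]

lemma gm_neg_tail {v : ℝ≥0} (hv : v ≠ 0) {t : ℝ} (ht : t ≤ 0) :
    gaussianReal 0 v (Set.Ioi t) ≤
      ENNReal.ofReal (1/2 + (-t) * (Real.sqrt (2 * π * v))⁻¹) := by
  have hv0 : (0:ℝ) < v := by positivity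
  have hsplit : Set.Ioi t ⊆ Set.Ioc t 0 ∪ Set.Ioi (0:ℝ) := by
    intro u hu
    rcases le_or_gt u 0 with h | h
    · exact Or.inl ⟨hu, h⟩
    · exact Or.inr h
  have hIoc : gaussianReal 0 v (Set.Ioc t 0) ≤
      ENNReal.ofReal ((-t) * (Real.sqrt (2 * π * v))⁻¹) := by
    have hb : ∀ x ∈ Set.Ioc t 0, gaussianPDF 0 v x ≤
        ENNReal.ofReal ((Real.sqrt (2 * π * v))⁻¹) := by
      intro x _
      refine ENNReal.ofReal_le_ofReal ?_
      rw [gaussianPDFReal]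
      have h1 : rexp (-(x - 0)^2 / (2*(v:ℝ))) ≤ 1 := by
        rw [Real.exp_le_one_iff, neg_div]
        have : (0:ℝ) ≤ (x-0)^2 / (2*(v:ℝ)) := by positivity
        linarith
      nlinarith [Real.sqrt_nonneg (2 * π * (v:ℝ)),
        inv_nonneg.2 (Real.sqrt_nonneg (2 * π * (v:ℝ)))]
    calc gaussianReal 0 v (Set.Ioc t 0) = ∫⁻ x in Set.Ioc t 0, gaussianPDF 0 v x :=
          gaussianReal_apply 0 hv _
      _ ≤ ∫⁻ _ in Set.Ioc t 0, ENNReal.ofReal ((Real.sqrt (2 * π * v))⁻¹) :=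
          setLIntegral_mono measurable_const hb
      _ = ENNReal.ofReal ((Real.sqrt (2 * π * v))⁻¹) * volume (Set.Ioc t 0) := by
          rw [setLIntegral_const]
      _ = ENNReal.ofReal ((Real.sqrt (2 * π * v))⁻¹) * ENNReal.ofReal (0 - t) := by
          rw [Real.volume_Ioc]
      _ = ENNReal.ofReal ((-t) * (Real.sqrt (2 * π * v))⁻¹) := by
          rw [← ENNReal.ofReal_mul (by positivity)]
          congr 1
          ring
  calc gaussianReal 0 v (Set.Ioi t)
      ≤ gaussianReal 0 v (Set.Ioc t 0 ∪ Set.Ioi (0:ℝ)) := measure_mono hsplit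
    _ ≤ gaussianReal 0 v (Set.Ioc t 0) + gaussianReal 0 v (Set.Ioi (0:ℝ)) :=
        measure_union_le _ _
    _ ≤ ENNReal.ofReal ((-t) * (Real.sqrt (2 * π * v))⁻¹) + 1/2 := by
        rw [gm_half hv]
        exact add_le_add_left hIoc _
    _ = ENNReal.ofReal (1/2 + (-t) * (Real.sqrt (2 * π * v))⁻¹) := by
        rw [ENNReal.ofReal_add (by norm_num) (mul_nonneg (neg_nonneg.2 ht) (by positivity))]
        rw [add_comm]
        congr 1
        rw [ENNReal.ofReal_div_of_pos (by norm_num), ENNReal.ofReal_one,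
          ENNReal.ofReal_ofNat]

lemma gm_exp_half : Real.exp (1/2 : ℝ) ≤ 1.6641 := by
  have h1 : Real.exp (1/2:ℝ) * Real.exp (1/2:ℝ) = Real.exp 1 := by
    rw [← Real.exp_add]; norm_num
  nlinarith [Real.exp_pos (1/2:ℝ), Real.exp_one_lt_d9]

lemma gm_exp_quarter : Real.exp (1/4 : ℝ) ≤ 1.29 := by
  have h1 : Real.exp (1/4:ℝ) * Real.exp (1/4:ℝ) = Real.exp (1/2:ℝ) := by
    rw [← Real.exp_add]; norm_num
  nlinarith [Real.exp_pos (1/4:ℝ), gm_exp_half]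

lemma gm_offB {v ε Δ d u : ℝ} (hε : 0 < ε) (hv : 0 < v) (hΔ : 0 < Δ)
    (hd : 0 < d) (hdle : d ≤ Δ) (hu : u*Δ ≤ v*ε - Δ^2/2) :
    2*d*u + d^2 ≤ 2*v*ε := by
  nlinarith [mul_le_mul_of_nonneg_left hu hd.le,
    mul_nonneg (mul_nonneg (sub_nonneg.2 hdle) hv.le) hε.le,
    mul_nonneg (sub_nonneg.2 hdle) (mul_pos hd hΔ).le, hΔ]

/-- `(ε,δ)`-differential privacy of a mechanism `A : datasets → output distributions`. -/
def IsDP {D O : Type*} [MeasurableSpace O] (neighbor : D → D → Prop)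
    (A : D → Measure O) (ε δ : ℝ) : Prop :=
  ∀ x y, neighbor x y → ∀ s : Set O, MeasurableSet s →
    A x s ≤ ENNReal.ofReal (Real.exp ε) * A y s + ENNReal.ofReal δ

/-- Gaussian mechanism: if `f` has ℓ₂-sensitivity `Δ`, `ε, δ ∈ (0,1)`, and
`σ² ≥ Δ²·2·ln(1.25/δ)/ε²`, then releasing `f(D) + N(0, σ²)` is `(ε,δ)`-DP. -/
theorem gaussian_mechanism {D : Type*} (neighbor : D → D → Prop)
    (f : D → ℝ) (Δ : ℝ) (hΔ : ∀ x y, neighbor x y → |f x - f y| ≤ Δ)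
    (ε δ : ℝ) (hε0 : 0 < ε) (hε1 : ε < 1) (hδ0 : 0 < δ) (hδ1 : δ < 1)
    (σ2 : ℝ≥0) (hσ : Δ ^ 2 * (2 * Real.log (1.25 / δ)) / ε ^ 2 ≤ (σ2 : ℝ)) :
    IsDP neighbor (fun x => ProbabilityTheory.gaussianReal (f x) σ2) ε δ := by
  intro x y hxy s hs
  have hab' : |f x - f y| ≤ Δ := hΔ x y hxy
  show gaussianReal (f x) σ2 s ≤
    ENNReal.ofReal (Real.exp ε) * gaussianReal (f y) σ2 s + ENNReal.ofReal δ
  by_cases hab : f x = f y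
  · rw [hab]
    calc gaussianReal (f y) σ2 s
        ≤ ENNReal.ofReal (Real.exp ε) * gaussianReal (f y) σ2 s := by
          refine le_mul_of_one_le_left zero_le ?_
          rw [← ENNReal.ofReal_one]
          exact ENNReal.ofReal_le_ofReal (Real.one_le_exp hε0.le)
      _ ≤ _ + ENNReal.ofReal δ := le_self_add
  · set a := f x with ha
    set b := f y with hb
    set d : ℝ := a - b with hd
    have hd0 : d ≠ 0 := sub_ne_zero.2 hab
    have hΔ0 : 0 < Δ := lt_of_lt_of_le (abs_pos.2 hd0) hab'
    have hdΔ : |d| ≤ Δ := hab'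
    have hL : 0 < Real.log (1.25/δ) := Real.log_pos (by rw [lt_div_iff₀ hδ0]; linarith)
    set L := Real.log (1.25/δ) with hLdef
    have hv0 : (0:ℝ) < σ2 :=
      lt_of_lt_of_le (div_pos (mul_pos (pow_pos hΔ0 2) (by linarith)) (pow_pos hε0 2)) hσ
    have hvne : σ2 ≠ 0 := by
      intro h
      rw [h] at hv0
      simp at hv0
    have hvε : 2*Δ^2*L ≤ (σ2:ℝ)*ε^2 := by
      rw [div_le_iff₀ (pow_pos hε0 2)] at hσ
      linarith
    set τ : ℝ := (σ2:ℝ)*ε/Δ - Δ/2 with hτdef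
    have hτΔ : τ*Δ = (σ2:ℝ)*ε - Δ^2/2 := by
      rw [hτdef]; field_simp
    set B : Set ℝ := if 0 < d then Set.Ioi (a + τ) else Set.Iio (a - τ) with hB
    have hgood : ∀ t ∈ s \ B,
        gaussianPDF a σ2 t ≤ ENNReal.ofReal (Real.exp ε) * gaussianPDF b σ2 t := by
      intro t htB
      rw [gaussianPDF, gaussianPDF, ← ENNReal.ofReal_mul (Real.exp_pos ε).le]
      refine ENNReal.ofReal_le_ofReal (gm_pdf_ratio hv0 ?_)
      have hexp : (t - b)^2 - (t - a)^2 = 2*d*(t-a) + d^2 := by rw [hd]; ring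
      rw [hexp]
      by_cases hdpos : 0 < d
      · have htle : t ≤ a + τ := by
          have h1 : t ∉ Set.Ioi (a + τ) := by
            have := htB.2
            rw [hB, if_pos hdpos] at this
            exact this
          simpa using h1
        have hu : (t - a)*Δ ≤ (σ2:ℝ)*ε - Δ^2/2 := by
          rw [← hτΔ]
          exact mul_le_mul_of_nonneg_right (by linarith) hΔ0.le
        exact gm_offB hε0 hv0 hΔ0 hdpos (le_trans (le_abs_self d) hdΔ) hu
      · have hdneg : d < 0 := lt_of_le_of_ne (not_lt.1 hdpos) hd0
        have htge : a - τ ≤ t := by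
          have h1 : t ∉ Set.Iio (a - τ) := by
            have := htB.2
            rw [hB, if_neg hdpos] at this
            exact this
          simpa using h1
        have hu : (a - t)*Δ ≤ (σ2:ℝ)*ε - Δ^2/2 := by
          rw [← hτΔ]
          exact mul_le_mul_of_nonneg_right (by linarith) hΔ0.le
        have he : 2*(-d)*(a-t) + (-d)^2 ≤ 2*(σ2:ℝ)*ε :=
          gm_offB hε0 hv0 hΔ0 (by linarith) (le_trans (neg_le_abs d) hdΔ) hu
        nlinarith [he]
    have hsub : s ⊆ (s \ B) ∪ B := by
      intro t ht
      by_cases h : t ∈ B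
      · exact Or.inr h
      · exact Or.inl ⟨ht, h⟩
    have hsplit : gaussianReal a σ2 s ≤
        gaussianReal a σ2 (s \ B) + gaussianReal a σ2 B :=
      (measure_mono hsub).trans (measure_union_le _ _)
    have hmain : gaussianReal a σ2 (s \ B) ≤
        ENNReal.ofReal (Real.exp ε) * gaussianReal b σ2 s := by
      calc gaussianReal a σ2 (s \ B) = ∫⁻ t in s \ B, gaussianPDF a σ2 t :=
            gaussianReal_apply a hvne _
        _ ≤ ∫⁻ t in s \ B, ENNReal.ofReal (Real.exp ε) * gaussianPDF b σ2 t :=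
            setLIntegral_mono ((measurable_gaussianPDF b σ2).const_mul _) hgood
        _ = ENNReal.ofReal (Real.exp ε) * ∫⁻ t in s \ B, gaussianPDF b σ2 t :=
            lintegral_const_mul _ (measurable_gaussianPDF b σ2)
        _ = ENNReal.ofReal (Real.exp ε) * gaussianReal b σ2 (s \ B) := by
            rw [← gaussianReal_apply b hvne]
        _ ≤ ENNReal.ofReal (Real.exp ε) * gaussianReal b σ2 s :=
            mul_le_mul_right (measure_mono Set.diff_subset) _
    have hBval : gaussianReal a σ2 B = gaussianReal 0 σ2 (Set.Ioi τ) := by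
      by_cases h : 0 < d
      · rw [hB, if_pos h, gm_Ioi_shift]
      · rw [hB, if_neg h, show a - τ = a + (-τ) by ring, gm_Iio_shift, gm_symm]
    have hbad : gaussianReal 0 σ2 (Set.Ioi τ) ≤ ENNReal.ofReal δ := by
      rcases le_or_gt 0 τ with hτ0 | hτ0
      · refine (gm_tail hvne hτ0).trans (ENNReal.ofReal_le_ofReal ?_)
        have hτΔ2 : (τ*Δ)^2 = ((σ2:ℝ)*ε - Δ^2/2)^2 := by rw [hτΔ]
        have hτ2 : 2*(σ2:ℝ)*(L - ε/2) ≤ τ^2 := by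
          nlinarith [hτΔ2, mul_le_mul_of_nonneg_left hvε hv0.le, pow_pos hΔ0 2,
            sq_nonneg ((σ2:ℝ)*ε - Δ^2/2)]
        have hexpτ : -τ^2/(2*(σ2:ℝ)) ≤ ε/2 - L := by
          rw [div_le_iff₀ (by positivity)]
          nlinarith [hτ2]
        have hexpL : Real.exp (-L) = 0.8*δ := by
          rw [Real.exp_neg, hLdef, Real.exp_log (by positivity), inv_div]
          norm_num
          ring
        calc Real.exp (-τ^2/(2*(σ2:ℝ)))/2 ≤ Real.exp (ε/2 - L)/2 := by
              gcongr
          _ ≤ Real.exp (1/2 - L)/2 := by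
              have : ε/2 - L ≤ 1/2 - L := by linarith
              gcongr
          _ = Real.exp (1/2:ℝ) * Real.exp (-L) / 2 := by
              rw [sub_eq_add_neg, Real.exp_add]
          _ ≤ 1.6641 * (0.8*δ) / 2 := by
              rw [hexpL]
              gcongr
              exact gm_exp_half
          _ ≤ δ := by linarith
      · refine (gm_neg_tail hvne hτ0.le).trans (ENNReal.ofReal_le_ofReal ?_)
        have hvεΔ : (σ2:ℝ)*ε < Δ^2/2 := by
          have h1 : (σ2:ℝ)*ε/Δ < Δ/2 := by
            rw [hτdef] at hτ0
            linarith
          rw [div_lt_iff₀ hΔ0] at h1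
          nlinarith [h1]
        have hL14 : L < 1/4 := by
          have h1 : (σ2:ℝ)*ε*ε < Δ^2/2*ε := mul_lt_mul_of_pos_right hvεΔ hε0
          nlinarith [hvε, pow_pos hΔ0 2, hε0, hε1]
        have hδbig : (1.25:ℝ) ≤ 1.29 * δ := by
          have h2 : 1.25/δ = Real.exp L := (Real.exp_log (by positivity)).symm
          have h3 : (1.25:ℝ)/δ ≤ 1.29 := by
            rw [h2]
            exact (Real.exp_le_exp.2 hL14.le).trans gm_exp_quarter
          rw [div_le_iff₀ hδ0] at h3
          exact h3
        have hL02 : (0.2:ℝ) ≤ L := by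
          have hlog : Real.log 0.8 ≤ 0.8 - 1 := Real.log_le_sub_one_of_pos (by norm_num)
          have h4 : Real.log 1.25 = - Real.log 0.8 := by
            rw [show (1.25:ℝ) = 0.8⁻¹ by norm_num, Real.log_inv]
          have hmono : Real.log 1.25 ≤ L := by
            rw [hLdef]
            refine Real.log_le_log (by norm_num) ?_
            rw [le_div_iff₀ hδ0]
            nlinarith
          linarith
        have hvΔ : 0.4*Δ^2 ≤ (σ2:ℝ) := by
          have hε2 : ε^2 ≤ 1 := by nlinarith
          have h5 : (σ2:ℝ)*ε^2 ≤ σ2 := by nlinarith [hv0]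
          nlinarith [mul_nonneg (sq_nonneg Δ) (sub_nonneg.2 hL02)]
        have hS2 : (Real.sqrt (2*π*(σ2:ℝ)))^2 = 2*π*(σ2:ℝ) := Real.sq_sqrt (by positivity)
        have hSpos : 0 < Real.sqrt (2*π*(σ2:ℝ)) := Real.sqrt_pos.2 (by positivity)
        have hπσ : (0:ℝ) ≤ (π - 3) * σ2 :=
          mul_nonneg (by linarith [Real.pi_gt_three]) hv0.le
        have h6 : Δ^2 ≤ (0.66*Real.sqrt (2*π*(σ2:ℝ)))^2 := by
          rw [mul_pow, hS2]
          nlinarith [hvΔ, hπσ, hv0]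
        have hΔS : Δ ≤ 0.66*Real.sqrt (2*π*(σ2:ℝ)) := by
          nlinarith [h6, hSpos, hΔ0]
        have hτb : -τ ≤ Δ/2 := by
          rw [hτdef]
          have : 0 < (σ2:ℝ)*ε/Δ := by positivity
          linarith
        have hfrac : (-τ) * (Real.sqrt (2*π*(σ2:ℝ)))⁻¹ ≤ 0.33 := by
          have h1 : (-τ) * (Real.sqrt (2*π*(σ2:ℝ)))⁻¹ ≤
              (Δ/2) * (Real.sqrt (2*π*(σ2:ℝ)))⁻¹ :=
            mul_le_mul_of_nonneg_right hτb (inv_nonneg.2 hSpos.le)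
          have h2 : (Δ/2) * (Real.sqrt (2*π*(σ2:ℝ)))⁻¹ ≤ 0.33 := by
            rw [← div_eq_mul_inv, div_le_iff₀ hSpos]
            linarith
          linarith
        linarith [hδbig, hfrac]
    calc gaussianReal a σ2 s ≤ gaussianReal a σ2 (s \ B) + gaussianReal a σ2 B :=
          hsplit
      _ ≤ ENNReal.ofReal (Real.exp ε) * gaussianReal b σ2 s + ENNReal.ofReal δ := by
          refine add_le_add hmain ?_
          rw [hBval]
          exact hbad
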